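/- Let f : ℤ_p → ℤ_p be a surjective 1-Lipschitz map. If f is ergodic for the Haar measure μ_p, then f is minimal: every forward orbit is dense in ℤ_p. -/

import Mathlib

open MeasureTheory

private lemma toZModPow_eq_iff' {p : ℕ} [Fact p.Prime] (n : ℕ) (x y : ℤ_[p]) :
    PadicInt.toZModPow n x = PadicInt.toZModPow n y ↔ ‖x - y‖ ≤ (p : ℝ) ^ (-(n : ℤ)) := by
  rw [← sub_eq_zero, ← map_sub, ← RingHom.mem_ker, PadicInt.ker_toZModPow,
    PadicInt.norm_le_pow_iff_mem_span_pow]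

theorem stmt10 (p : ℕ) [Fact p.Prime] [MeasurableSpace ℤ_[p]] [BorelSpace ℤ_[p]]
    (μ : MeasureTheory.Measure ℤ_[p]) [MeasureTheory.IsProbabilityMeasure μ]
    (hinv : ∀ (a : ℤ_[p]) (A : Set ℤ_[p]), MeasurableSet A → μ ((fun x => a + x) ⁻¹' A) = μ A)
    (f : ℤ_[p] → ℤ_[p])
    (hlip : ∀ x y : ℤ_[p], ‖f y - f x‖ ≤ ‖y - x‖)
    (hsurj : Function.Surjective f)
    (herg : Ergodic f μ) :
    ∀ x : ℤ_[p], Dense (Set.range fun k : ℕ => f^[k] x) := by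
  have hp : p.Prime := Fact.out
  intro x
  rw [Metric.dense_iff]
  intro z ε hε
  obtain ⟨n, hn⟩ := PadicInt.exists_pow_neg_lt p hε
  haveI : NeZero (p ^ n) := ⟨pow_ne_zero n hp.ne_zero⟩
  set π : ℤ_[p] →+* ZMod (p ^ n) := PadicInt.toZModPow n with hπ
  have hπsurj : Function.Surjective π := fun b =>
    ⟨(b.val : ℤ_[p]), by rw [map_natCast, ZMod.natCast_zmod_val]⟩
  choose s hs using hπsurj
  set fn : ZMod (p ^ n) → ZMod (p ^ n) := fun c => π (f (s c)) with hfn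
  -- commutation
  have hcomm : ∀ w : ℤ_[p], fn (π w) = π (f w) := by
    intro w
    have h1 : π (s (π w)) = π w := hs _
    rw [toZModPow_eq_iff'] at h1 ⊢
    exact le_trans (hlip _ _) h1
  -- fn surjective, injective
  have hfnsurj : Function.Surjective fn := by
    intro b
    obtain ⟨y, hy⟩ : ∃ y, π y = b := match b with | b => ⟨(b.val : ℤ_[p]), by rw [map_natCast, ZMod.natCast_zmod_val]⟩
    obtain ⟨w, rfl⟩ := hsurj y
    exact ⟨π w, by rw [hcomm, hy]⟩
  have hfninj : Function.Injective fn := Finite.injective_iff_surjective.mpr hfnsurj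
  -- fibers
  have hfiber_meas : ∀ c : ZMod (p ^ n), MeasurableSet (π ⁻¹' {c}) := by
    intro c
    have : π ⁻¹' {c} = Metric.closedBall (s c) ((p : ℝ) ^ (-(n : ℤ))) := by
      ext w
      simp only [Set.mem_preimage, Set.mem_singleton_iff, Metric.mem_closedBall, dist_eq_norm]
      have h := toZModPow_eq_iff' n w (s c)
      rw [hs c] at h
      exact h
    rw [this]
    exact measurableSet_closedBall
  have hfiber_eq : ∀ c c' : ZMod (p ^ n), μ (π ⁻¹' {c}) = μ (π ⁻¹' {c'}) := by
    intro c c'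
    obtain ⟨t, ht⟩ : ∃ t, π t = c - c' := ⟨s _, hs _⟩
    have key : (fun w => t + w) ⁻¹' (π ⁻¹' {c}) = π ⁻¹' {c'} := by
      ext w
      simp only [Set.mem_preimage, Set.mem_singleton_iff, map_add, ht]
      constructor
      · intro h; have := congrArg (fun u => u - (c - c')) h; simpa using this
      · intro h; rw [h]; ring
    rw [← key, hinv t _ (hfiber_meas c)]
  have hfiber_pos : ∀ c : ZMod (p ^ n), 0 < μ (π ⁻¹' {c}) := by
    intro c
    by_contra h
    push_neg at h
    have h0 : μ (π ⁻¹' {c}) = 0 := le_antisymm h (zero_le)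
    have huniv : (Set.univ : Set ℤ_[p]) = ⋃ c' : ZMod (p ^ n), π ⁻¹' {c'} := by
      ext w; simp
    have : μ (Set.univ : Set ℤ_[p]) = 0 := by
      rw [huniv]
      exact measure_iUnion_null fun c' => by rw [hfiber_eq c' c]; exact h0
    simp [measure_univ] at this
  -- the orbit set
  set a : ZMod (p ^ n) := π x with ha
  set S : Set (ZMod (p ^ n)) := Set.range (fun k : ℕ => fn^[k] a) with hS
  have haS : a ∈ S := ⟨0, rfl⟩
  -- a is periodic
  have hper : ∃ m : ℕ, 1 ≤ m ∧ fn^[m] a = a := by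
    obtain ⟨i, j, hij, hmap⟩ := Finite.exists_ne_map_eq_of_infinite (fun k : ℕ => fn^[k] a)
    rcases lt_or_gt_of_ne hij with h | h
    · refine ⟨j - i, by omega, ?_⟩
      have : fn^[i] (fn^[j-i] a) = fn^[i] a := by
        rw [← Function.iterate_add_apply]
        rw [show i + (j - i) = j by omega]
        exact hmap.symm
      exact hfninj.iterate i this
    · refine ⟨i - j, by omega, ?_⟩
      have : fn^[j] (fn^[i-j] a) = fn^[j] a := by
        rw [← Function.iterate_add_apply]
        rw [show j + (i - j) = i by omega]
        exact hmap
      exact hfninj.iterate j this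
  have hSinv : fn ⁻¹' S = S := by
    ext c
    simp only [Set.mem_preimage]
    constructor
    · rintro ⟨k, hk⟩
      obtain ⟨m, hm1, hm⟩ := hper
      have hk' : fn^[k] a = fn c := hk
      have h2 : fn^[k + m] a = fn^[k] a := by
        rw [Function.iterate_add_apply, hm]
      have h3 : fn (fn^[k + m - 1] a) = fn c := by
        rw [← Function.iterate_succ_apply' fn (k + m - 1) a,
          show (k + m - 1).succ = k + m by omega, h2, hk']
      exact ⟨k + m - 1, hfninj h3⟩
    · rintro ⟨k, hk⟩
      have hk' : fn^[k] a = c := hk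
      exact ⟨k + 1, show fn^[k+1] a = fn c by
        rw [Function.iterate_succ_apply', hk']⟩
  -- invariance of the preimage
  have hAinv : f ⁻¹' (π ⁻¹' S) = π ⁻¹' S := by
    ext w
    simp only [Set.mem_preimage]
    rw [← hcomm w, ← Set.mem_preimage (f := fn), hSinv]
  have hA_meas : MeasurableSet (π ⁻¹' S) := by
    have : π ⁻¹' S = ⋃ c ∈ S, π ⁻¹' {c} := by ext w; simp
    rw [this]
    exact S.toFinite.measurableSet_biUnion fun c _ => hfiber_meas c
  -- ergodicity
  rcases herg.toPreErgodic.measure_self_or_compl_eq_zero hA_meas hAinv with h0 | h1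
  · exfalso
    have : π ⁻¹' {a} ⊆ π ⁻¹' S := Set.preimage_mono (Set.singleton_subset_iff.mpr haS)
    exact absurd (le_antisymm (h0 ▸ measure_mono this) (zero_le))
      (ne_of_gt (hfiber_pos a))
  · have hSuniv : S = Set.univ := by
      by_contra h
      obtain ⟨c, hc⟩ : ∃ c, c ∉ S := by
        by_contra h'
        push_neg at h'
        exact h (Set.eq_univ_of_forall h')
      have hsub : π ⁻¹' {c} ⊆ (π ⁻¹' S)ᶜ := by
        intro w hw
        simp only [Set.mem_preimage, Set.mem_singleton_iff] at hw
        simp only [Set.mem_compl_iff, Set.mem_preimage, hw]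
        exact hc
      exact absurd (le_antisymm (h1 ▸ measure_mono hsub) (zero_le))
        (ne_of_gt (hfiber_pos c))
    have : π z ∈ S := hSuniv ▸ Set.mem_univ _
    obtain ⟨k, hk⟩ := this
    have hk' : fn^[k] a = π z := hk
    refine ⟨f^[k] x, Metric.mem_ball.mpr ?_, ⟨k, rfl⟩⟩
    have hall : ∀ m : ℕ, π (f^[m] x) = fn^[m] a := by
      intro m
      induction m with
      | zero => rfl
      | succ m ih =>
        rw [Function.iterate_succ_apply', Function.iterate_succ_apply', ← ih, hcomm]
    have hπk : π (f^[k] x) = π z := by rw [hall k, hk']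
    rw [dist_eq_norm]
    calc ‖f^[k] x - z‖ ≤ (p : ℝ) ^ (-(n : ℤ)) := (toZModPow_eq_iff' n _ _).mp hπk
    _ < ε := hn
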